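/- For every ℓ ≥ 1, every elementary abelian 3-subgroup of GL_ℓ(𝔽₂) has order at most 3^{⌊ℓ/2⌋}. -/

import Mathlib

open Module LinearMap

variable {V : Type} [AddCommGroup V] [Module (ZMod 2) V]

lemma add_self_eq_zero' (v : V) : v + v = 0 := by
  have : ((2 : ZMod 2) • v) = v + v := two_smul _ v
  rw [show (2 : ZMod 2) = 0 by decide, zero_smul] at this
  exact this.symm

lemma two_eq_zero_End : (2 : Module.End (ZMod 2) V) = 0 := by
  ext v
  rw [show (2 : Module.End (ZMod 2) V) = 1 + 1 by norm_num]
  simpa [LinearMap.add_apply] using add_self_eq_zero' v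

-- generic kernel decomposition
lemma ker_decomp (a b c d : Module.End (ZMod 2) V)
    (h1 : c * b + d * a = 1) (h2 : a * (c * b) = 0) (h3 : b * (d * a) = 0) :
    ker a ⊔ ker b = ⊤ ∧ Disjoint (ker a) (ker b) := by
  constructor
  · rw [eq_top_iff]
    intro v _
    have hv : v = (c * b) v + (d * a) v := by
      have := congrArg (fun (e : Module.End (ZMod 2) V) => e v) h1
      simpa [LinearMap.add_apply] using this.symm
    rw [hv]
    refine Submodule.add_mem_sup ?_ ?_
    · rw [mem_ker, ← Module.End.mul_apply, h2]; rfl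
    · rw [mem_ker, ← Module.End.mul_apply, h3]; rfl
  · rw [disjoint_iff, eq_bot_iff]
    intro v hv
    obtain ⟨hva, hvb⟩ := Submodule.mem_inf.mp hv
    rw [mem_ker] at hva hvb
    have hv0 : v = (c * b) v + (d * a) v := by
      have := congrArg (fun (e : Module.End (ZMod 2) V) => e v) h1
      simpa [LinearMap.add_apply] using this.symm
    rw [Module.End.mul_apply, Module.End.mul_apply, hva, hvb, map_zero, map_zero, add_zero] at hv0
    simp [hv0]

lemma decomp_one (g : Module.End (ZMod 2) V) (hg : g ^ 3 = 1) :
    ker (g - 1) ⊔ ker (g ^ 2 + g + 1) = ⊤ ∧ Disjoint (ker (g - 1)) (ker (g ^ 2 + g + 1)) := by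
  refine ker_decomp _ _ 1 g ?_ ?_ ?_
  · have h : (1 : Module.End (ZMod 2) V) * (g^2+g+1) + g * (g-1) = 2*g^2 + 1 := by noncomm_ring
    rw [h, two_eq_zero_End, zero_mul, zero_add]
  · have h : (g-1) * ((1 : Module.End (ZMod 2) V) * (g^2+g+1)) = g^3 - 1 := by noncomm_ring
    rw [h, hg, sub_self]
  · have h : (g^2+g+1) * (g * (g-1)) = g^3*g - g := by noncomm_ring
    rw [h, hg, one_mul, sub_self]

lemma decomp_omega (f h : Module.End (ZMod 2) V) (hcomm : f * h = h * f)
    (hpf : f ^ 2 + f + 1 = 0) (hph : h ^ 2 + h + 1 = 0) :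
    ker (h - f) ⊔ ker (h - f ^ 2) = ⊤ ∧ Disjoint (ker (h - f)) (ker (h - f ^ 2)) := by
  have e1 : f ^ 2 + f = -1 := add_eq_zero_iff_eq_neg.mp hpf
  have e3 : f ^ 3 = 1 := by
    have h' : f ^ 3 = f * (f ^ 2 + f + 1) - (f ^ 2 + f) := by noncomm_ring
    rw [hpf, mul_zero, zero_sub, e1, neg_neg] at h'
    exact h'
  have hcomm2 : f ^ 2 * h = h * f ^ 2 := by
    rw [pow_two, mul_assoc, hcomm, ← mul_assoc, hcomm, mul_assoc]
  have hcore : h * h - h * f ^ 2 - h * f + 1 = 0 := by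
    have k2 : h * h - h * f ^ 2 - h * f + 1 = (h ^ 2 + h + 1) - h * (f ^ 2 + f) - h := by
      noncomm_ring
    rw [k2, hph, e1]
    noncomm_ring
  have key : (h - f) * (h - f ^ 2) = 0 := by
    have k1 : (h - f) * (h - f ^ 2) = h * h - h * f ^ 2 - f * h + f ^ 3 := by noncomm_ring
    rw [hcomm, e3] at k1
    rw [k1]; exact hcore
  have key' : (h - f ^ 2) * (h - f) = 0 := by
    have k1 : (h - f ^ 2) * (h - f) = h * h - h * f - f ^ 2 * h + f ^ 2 * f := by noncomm_ring
    rw [hcomm2] at k1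
    have k2 : h * h - h * f - h * f ^ 2 + f ^ 2 * f = h * h - h * f ^ 2 - h * f + f ^ 3 := by
      noncomm_ring
    rw [k1, k2, e3]; exact hcore
  refine ker_decomp _ _ 1 1 ?_ ?_ ?_
  · have h1 : (1 : Module.End (ZMod 2) V) * (h - f ^ 2) + 1 * (h - f) = 2 * h - (f ^ 2 + f + 1) + 1 := by
      noncomm_ring
    rw [h1, hpf, two_eq_zero_End, zero_mul]
    simp
  · rw [one_mul]; exact key
  · rw [one_mul]; exact key'

section Res
variable (A : Subgroup (Module.End (ZMod 2) V)ˣ) (W : Submodule (ZMod 2) V)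
  (hW : ∀ a ∈ A, ∀ v ∈ W, (a : (Module.End (ZMod 2) V)ˣ).val v ∈ W)

/-- restriction of a subgroup of units of End to an invariant submodule -/
noncomputable def resHom : A →* (Module.End (ZMod 2) W)ˣ where
  toFun a :=
    { val := LinearMap.restrict (a : (Module.End (ZMod 2) V)ˣ).val (hW a a.2)
      inv := LinearMap.restrict ((a⁻¹ : A) : (Module.End (ZMod 2) V)ˣ).val (hW _ (a⁻¹ : A).2)
      val_inv := by
        ext w
        simp only [Module.End.mul_apply, LinearMap.restrict_coe_apply, Module.End.one_apply]
        show ((a : (Module.End (ZMod 2) V)ˣ).val * ((a⁻¹ : A) : (Module.End (ZMod 2) V)ˣ).val) w = w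
        rw [show ((a⁻¹ : A) : (Module.End (ZMod 2) V)ˣ) = (a : (Module.End (ZMod 2) V)ˣ)⁻¹ from rfl,
          Units.mul_inv]
        rfl
      inv_val := by
        ext w
        simp only [Module.End.mul_apply, LinearMap.restrict_coe_apply, Module.End.one_apply]
        show (((a⁻¹ : A) : (Module.End (ZMod 2) V)ˣ).val * (a : (Module.End (ZMod 2) V)ˣ).val) w = w
        rw [show ((a⁻¹ : A) : (Module.End (ZMod 2) V)ˣ) = (a : (Module.End (ZMod 2) V)ˣ)⁻¹ from rfl,
          Units.inv_mul]
        rfl }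
  map_one' := by
    apply Units.ext
    ext w
    simp [LinearMap.restrict_coe_apply]
  map_mul' := fun a b => by
    apply Units.ext
    ext w
    simp [LinearMap.restrict_coe_apply]

lemma resHom_apply (a : A) (w : W) :
    ((((resHom A W hW) a : (Module.End (ZMod 2) W)ˣ) : Module.End (ZMod 2) W) w : V)
      = (a : (Module.End (ZMod 2) V)ˣ).val w := by
  simp [resHom, LinearMap.restrict_coe_apply]

end Res

lemma finite_units_End (W : Type) [AddCommGroup W] [Module (ZMod 2) W]
    [FiniteDimensional (ZMod 2) W] : Finite (Module.End (ZMod 2) W)ˣ := by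
  haveI : Finite W := Module.finite_of_finite (ZMod 2)
  haveI : Finite (Module.End (ZMod 2) W) := Finite.of_injective _ DFunLike.coe_injective
  exact Finite.of_injective Units.val Units.val_injective

lemma card_le_mul [FiniteDimensional (ZMod 2) V] (A : Subgroup (Module.End (ZMod 2) V)ˣ)
    (W₁ W₂ : Submodule (ZMod 2) V)
    (h1 : ∀ a ∈ A, ∀ v ∈ W₁, (a : (Module.End (ZMod 2) V)ˣ).val v ∈ W₁)
    (h2 : ∀ a ∈ A, ∀ v ∈ W₂, (a : (Module.End (ZMod 2) V)ˣ).val v ∈ W₂)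
    (hsup : W₁ ⊔ W₂ = ⊤) :
    Nat.card A ≤ Nat.card (resHom A W₁ h1).range * Nat.card (resHom A W₂ h2).range := by
  haveI := finite_units_End W₁
  haveI := finite_units_End W₂
  rw [← Nat.card_prod]
  apply Nat.card_le_card_of_injective
    (fun a => ((⟨resHom A W₁ h1 a, ⟨a, rfl⟩⟩, ⟨resHom A W₂ h2 a, ⟨a, rfl⟩⟩) :
      (resHom A W₁ h1).range × (resHom A W₂ h2).range))
  intro a b hab
  obtain ⟨hab1, hab2⟩ := Prod.mk.injEq .. ▸ hab
  have hab1 : resHom A W₁ h1 a = resHom A W₁ h1 b := congrArg Subtype.val hab1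
  have hab2 : resHom A W₂ h2 a = resHom A W₂ h2 b := congrArg Subtype.val hab2
  have hE : ∀ (W : Submodule (ZMod 2) V) (h : ∀ a ∈ A, ∀ v ∈ W, (a : (Module.End (ZMod 2) V)ˣ).val v ∈ W),
      resHom A W h a = resHom A W h b →
      W ≤ LinearMap.eqLocus (a : (Module.End (ZMod 2) V)ˣ).val (b : (Module.End (ZMod 2) V)ˣ).val := by
    intro W h heq v hv
    have := congrArg (fun u : (Module.End (ZMod 2) W)ˣ => (u.val ⟨v, hv⟩ : W).val) heq
    rw [LinearMap.mem_eqLocus]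
    simpa only [resHom_apply] using this
  have htop : LinearMap.eqLocus (a : (Module.End (ZMod 2) V)ˣ).val (b : (Module.End (ZMod 2) V)ˣ).val = ⊤ := by
    rw [eq_top_iff, ← hsup]
    exact sup_le (hE W₁ h1 hab1) (hE W₂ h2 hab2)
  have : (a : (Module.End (ZMod 2) V)ˣ).val = (b : (Module.End (ZMod 2) V)ˣ).val := by
    ext v
    have hv : v ∈ LinearMap.eqLocus (a : (Module.End (ZMod 2) V)ˣ).val (b : (Module.End (ZMod 2) V)ˣ).val :=
      htop ▸ Submodule.mem_top
    exact LinearMap.mem_eqLocus.mp hv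
  exact Subtype.ext (Units.ext this)

section RangeProps
variable (A : Subgroup (Module.End (ZMod 2) V)ˣ) (W : Submodule (ZMod 2) V)
  (hW : ∀ a ∈ A, ∀ v ∈ W, (a : (Module.End (ZMod 2) V)ˣ).val v ∈ W)

lemma range_comm (hcomm : ∀ x ∈ A, ∀ y ∈ A, x * y = y * x) :
    ∀ x ∈ (resHom A W hW).range, ∀ y ∈ (resHom A W hW).range, x * y = y * x := by
  rintro x ⟨a, rfl⟩ y ⟨b, rfl⟩
  rw [← map_mul, ← map_mul]
  congr 1
  exact Subtype.ext (hcomm a a.2 b b.2)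

lemma range_exp (hexp : ∀ x ∈ A, x ^ 3 = 1) :
    ∀ x ∈ (resHom A W hW).range, x ^ 3 = 1 := by
  rintro x ⟨a, rfl⟩
  rw [← map_pow, show a ^ 3 = 1 from Subtype.ext (hexp a a.2), map_one]

lemma range_op_comm (f : Module.End (ZMod 2) V) (hfW : ∀ v ∈ W, f v ∈ W)
    (hfa : ∀ a ∈ A, f * (a : (Module.End (ZMod 2) V)ˣ).val = (a : (Module.End (ZMod 2) V)ˣ).val * f) :
    ∀ x ∈ (resHom A W hW).range,
      (f.restrict hfW) * (x : (Module.End (ZMod 2) W)ˣ).val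
        = (x : (Module.End (ZMod 2) W)ˣ).val * (f.restrict hfW) := by
  rintro x ⟨a, rfl⟩
  ext w
  have h1 : ∀ u : W, ((f.restrict hfW) u : V) = f u := fun u => LinearMap.restrict_coe_apply ..
  have h2 := congrArg (fun (e : Module.End (ZMod 2) V) => e (w : V)) (hfa a a.2)
  simp only [Module.End.mul_apply] at h2 ⊢
  show ((f.restrict hfW) ((resHom A W hW a).val w) : V) = ((resHom A W hW a).val ((f.restrict hfW) w) : V)
  rw [h1, resHom_apply, resHom_apply, h1]
  exact h2

end RangeProps

lemma neg_one_eq_one_End : (-1 : Module.End (ZMod 2) V) = 1 := by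
  rw [neg_eq_iff_add_eq_zero, one_add_one_eq_two]
  exact two_eq_zero_End

/-- a unit from an endomorphism satisfying x²+x+1=0 -/
noncomputable def omegaUnit (f : Module.End (ZMod 2) V) (hf : f ^ 2 + f + 1 = 0) :
    (Module.End (ZMod 2) V)ˣ where
  val := f
  inv := f + 1
  val_inv := by
    have h : f * (f + 1) = f ^ 2 + f := by noncomm_ring
    rw [h, add_eq_zero_iff_eq_neg.mp hf, neg_one_eq_one_End]
  inv_val := by
    have h : (f + 1) * f = f ^ 2 + f := by noncomm_ring
    rw [h, add_eq_zero_iff_eq_neg.mp hf, neg_one_eq_one_End]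

lemma omega_cube (f : Module.End (ZMod 2) V) (hf : f ^ 2 + f + 1 = 0) : f ^ 3 = 1 := by
  have h' : f ^ 3 = f * (f ^ 2 + f + 1) - (f ^ 2 + f) := by noncomm_ring
  rw [hf, mul_zero, zero_sub, add_eq_zero_iff_eq_neg.mp hf, neg_neg] at h'
  exact h'

lemma even_of_two_pow_mod_three {d : ℕ} (h : 2 ^ d ≡ 1 [MOD 3]) : Even d := by
  rcases Nat.even_or_odd d with he | ho
  · exact he
  · exfalso
    obtain ⟨k, rfl⟩ := ho
    have h2 : 2 ^ (2 * k + 1) % 3 = 2 := by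
      rw [pow_succ, pow_mul, Nat.mul_mod, Nat.pow_mod]
      norm_num
    rw [Nat.ModEq, h2] at h
    simp at h

lemma even_finrank_of_omega [FiniteDimensional (ZMod 2) V]
    (f : Module.End (ZMod 2) V) (hf : f ^ 2 + f + 1 = 0) :
    Even (finrank (ZMod 2) V) := by
  haveI : Finite V := Module.finite_of_finite (ZMod 2)
  -- fixed points of f are 0
  have hfix : ∀ v : V, f v = v → v = 0 := by
    intro v hv
    have h0 := congrArg (fun (e : Module.End (ZMod 2) V) => e v) hf
    simp only [LinearMap.add_apply, LinearMap.zero_apply, Module.End.one_apply, pow_two,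
      Module.End.mul_apply, hv] at h0
    -- h0 : v + v + v = 0
    rwa [add_self_eq_zero', zero_add] at h0
  set u := omegaUnit f hf with hu
  have hu3 : u ^ 3 = 1 := Units.ext (omega_cube f hf)
  set G := Subgroup.zpowers u with hG
  have hpG : IsPGroup 3 G := by
    intro x
    refine ⟨1, ?_⟩
    obtain ⟨n, hn⟩ := x.2
    apply Subtype.ext
    show (x : (Module.End (ZMod 2) V)ˣ) ^ 3 ^ 1 = 1
    rw [← hn, pow_one, ← zpow_natCast, ← zpow_mul, mul_comm, zpow_mul, zpow_natCast, hu3, one_zpow]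
  haveI : Fact (Nat.Prime 3) := ⟨by norm_num⟩
  have hmod := hpG.card_modEq_card_fixedPoints V
  have hfixset : MulAction.fixedPoints G V = {0} := by
    ext v
    simp only [MulAction.mem_fixedPoints, Set.mem_singleton_iff]
    constructor
    · intro hv
      exact hfix v (hv ⟨u, Subgroup.mem_zpowers u⟩)
    · rintro rfl g
      show (g : (Module.End (ZMod 2) V)ˣ).val 0 = 0
      exact map_zero _
  rw [hfixset] at hmod
  have h1 : Nat.card ({0} : Set V) = 1 := by simp
  rw [h1] at hmod
  have hcard : Nat.card V = 2 ^ finrank (ZMod 2) V := by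
    haveI : Fintype V := Fintype.ofFinite V
    rw [Nat.card_eq_fintype_card, card_eq_pow_finrank (K := ZMod 2) (V := V), ZMod.card]
  rw [hcard] at hmod
  -- 2 ^ d ≡ 1 [MOD 3] → Even d
  exact even_of_two_pow_mod_three hmod

lemma ker_inv (e c : Module.End (ZMod 2) V) (hc : e * c = c * e) :
    ∀ v ∈ ker c, e v ∈ ker c := by
  intro v hv
  rw [mem_ker] at hv ⊢
  rw [← Module.End.mul_apply, ← hc, Module.End.mul_apply, hv, map_zero]

lemma restrict_omega (f : Module.End (ZMod 2) V) (hf : f ^ 2 + f + 1 = 0)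
    (W : Submodule (ZMod 2) V) (hfW : ∀ v ∈ W, f v ∈ W) :
    (f.restrict hfW) ^ 2 + f.restrict hfW + 1 = 0 := by
  ext w
  have h0 := congrArg (fun (e : Module.End (ZMod 2) V) => e (w : V)) hf
  simp only [LinearMap.add_apply, LinearMap.zero_apply, Module.End.one_apply, pow_two,
    Module.End.mul_apply] at h0 ⊢
  simp only [Submodule.coe_add, ZeroMemClass.coe_zero, LinearMap.restrict_coe_apply]
  exact h0

lemma combine_bound [FiniteDimensional (ZMod 2) V] (A : Subgroup (Module.End (ZMod 2) V)ˣ)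
    (W₁ W₂ : Submodule (ZMod 2) V)
    (h1 : ∀ a ∈ A, ∀ v ∈ W₁, (a : (Module.End (ZMod 2) V)ˣ).val v ∈ W₁)
    (h2 : ∀ a ∈ A, ∀ v ∈ W₂, (a : (Module.End (ZMod 2) V)ˣ).val v ∈ W₂)
    (hsup : W₁ ⊔ W₂ = ⊤) (hdisj : Disjoint W₁ W₂)
    (hb1 : Nat.card (resHom A W₁ h1).range ≤ 3 ^ (finrank (ZMod 2) W₁ / 2))
    (hb2 : Nat.card (resHom A W₂ h2).range ≤ 3 ^ (finrank (ZMod 2) W₂ / 2)) :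
    Nat.card A ≤ 3 ^ (finrank (ZMod 2) V / 2) := by
  have hrank : finrank (ZMod 2) W₁ + finrank (ZMod 2) W₂ = finrank (ZMod 2) V := by
    have := Submodule.finrank_sup_add_finrank_inf_eq W₁ W₂
    rw [hsup, disjoint_iff.mp hdisj] at this
    rw [finrank_top] at this
    simpa [finrank_bot] using this.symm
  calc Nat.card A ≤ Nat.card (resHom A W₁ h1).range * Nat.card (resHom A W₂ h2).range :=
        card_le_mul A W₁ W₂ h1 h2 hsup
    _ ≤ 3 ^ (finrank (ZMod 2) W₁ / 2) * 3 ^ (finrank (ZMod 2) W₂ / 2) :=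
        Nat.mul_le_mul hb1 hb2
    _ = 3 ^ (finrank (ZMod 2) W₁ / 2 + finrank (ZMod 2) W₂ / 2) := (pow_add 3 _ _).symm
    _ ≤ 3 ^ (finrank (ZMod 2) V / 2) := by
        apply Nat.pow_le_pow_right (by norm_num)
        rw [← hrank]
        have a1 := Nat.div_mul_le_self (finrank (ZMod 2) W₁) 2
        have a2 := Nat.div_mul_le_self (finrank (ZMod 2) W₂) 2
        omega

lemma comm_sub_one {a h : Module.End (ZMod 2) V} (hc : a * h = h * a) :
    a * (h - 1) = (h - 1) * a := by rw [mul_sub, sub_mul, mul_one, one_mul, hc]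

lemma comm_pow2 {a h : Module.End (ZMod 2) V} (hc : a * h = h * a) :
    a * h ^ 2 = h ^ 2 * a := by
  rw [pow_two, ← mul_assoc, hc, mul_assoc, hc, mul_assoc]

lemma comm_quad {a h : Module.End (ZMod 2) V} (hc : a * h = h * a) :
    a * (h ^ 2 + h + 1) = (h ^ 2 + h + 1) * a := by
  rw [mul_add, mul_add, add_mul, add_mul, comm_pow2 hc, hc, mul_one, one_mul]

lemma comm_sub {a h f : Module.End (ZMod 2) V} (hc1 : a * h = h * a) (hc2 : a * f = f * a) :
    a * (h - f) = (h - f) * a := by rw [mul_sub, sub_mul, hc1, hc2]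

lemma card_eq_one_of_subsingleton (hV : Subsingleton V) (A : Subgroup (Module.End (ZMod 2) V)ˣ) :
    Nat.card A = 1 := by
  haveI := hV
  haveI : Subsingleton (Module.End (ZMod 2) V) :=
    ⟨fun a b => LinearMap.ext fun v => Subsingleton.elim _ _⟩
  haveI : Subsingleton (Module.End (ZMod 2) V)ˣ := Units.val_injective.subsingleton
  haveI : Unique A := ⟨⟨1⟩, fun a => Subtype.ext (Subsingleton.elim _ _)⟩
  exact Nat.card_unique

theorem lemF4 (n : ℕ) : ∀ (V : Type) [AddCommGroup V] [Module (ZMod 2) V]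
    [FiniteDimensional (ZMod 2) V],
    finrank (ZMod 2) V ≤ n →
    ∀ (f : Module.End (ZMod 2) V), f ^ 2 + f + 1 = 0 →
    ∀ (A : Subgroup (Module.End (ZMod 2) V)ˣ),
      (∀ x ∈ A, ∀ y ∈ A, x * y = y * x) →
      (∀ x ∈ A, x ^ 3 = 1) →
      (∀ x ∈ A, f * (x : (Module.End (ZMod 2) V)ˣ).val = (x : (Module.End (ZMod 2) V)ˣ).val * f) →
      Nat.card A ≤ 3 ^ (finrank (ZMod 2) V / 2) := by
  induction n with
  | zero =>
    intro V _ _ _ hle f hf A hcomm hexp hfA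
    have h0 : finrank (ZMod 2) V = 0 := Nat.le_zero.mp hle
    rw [card_eq_one_of_subsingleton (Module.finrank_zero_iff.mp h0) A]
    exact Nat.one_le_pow _ _ (by norm_num)
  | succ n ih =>
    intro V _ _ _ hle f hf A hcomm hexp hfA
    by_cases hV0 : finrank (ZMod 2) V = 0
    · rw [card_eq_one_of_subsingleton (Module.finrank_zero_iff.mp hV0) A]
      exact Nat.one_le_pow _ _ (by norm_num)
    have finish : ∀ (W₁ W₂ : Submodule (ZMod 2) V), W₁ ⊔ W₂ = ⊤ → Disjoint W₁ W₂ →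
        W₁ ≠ ⊤ → W₂ ≠ ⊤ →
        ∀ (hinv1 : ∀ a ∈ A, ∀ v ∈ W₁, (a : (Module.End (ZMod 2) V)ˣ).val v ∈ W₁)
          (hinv2 : ∀ a ∈ A, ∀ v ∈ W₂, (a : (Module.End (ZMod 2) V)ˣ).val v ∈ W₂)
          (hfW1 : ∀ v ∈ W₁, f v ∈ W₁) (hfW2 : ∀ v ∈ W₂, f v ∈ W₂),
        Nat.card A ≤ 3 ^ (finrank (ZMod 2) V / 2) := by
      intro W₁ W₂ hsup hdisj hne1 hne2 hinv1 hinv2 hfW1 hfW2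
      have hlt1 : finrank (ZMod 2) W₁ ≤ n := by
        have := Submodule.finrank_lt (K := ZMod 2) hne1
        omega
      have hlt2 : finrank (ZMod 2) W₂ ≤ n := by
        have := Submodule.finrank_lt (K := ZMod 2) hne2
        omega
      refine combine_bound A W₁ W₂ hinv1 hinv2 hsup hdisj ?_ ?_
      · exact ih W₁ hlt1 (f.restrict hfW1) (restrict_omega f hf W₁ hfW1) _
          (range_comm A W₁ hinv1 hcomm) (range_exp A W₁ hinv1 hexp)
          (range_op_comm A W₁ hinv1 f hfW1 hfA)
      · exact ih W₂ hlt2 (f.restrict hfW2) (restrict_omega f hf W₂ hfW2) _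
          (range_comm A W₂ hinv2 hcomm) (range_exp A W₂ hinv2 hexp)
          (range_op_comm A W₂ hinv2 f hfW2 hfA)
    by_cases hA : ∀ x ∈ A, x ∈ Subgroup.zpowers (omegaUnit f hf)
    · -- A consists of "scalars"
      haveI := finite_units_End V
      have hA' : A ≤ Subgroup.zpowers (omegaUnit f hf) := fun x hx => hA x hx
      have hcard : Nat.card A ≤ 3 := by
        calc Nat.card A ≤ Nat.card (Subgroup.zpowers (omegaUnit f hf)) :=
              Nat.card_le_card_of_injective _ (Subgroup.inclusion_injective hA')
          _ = orderOf (omegaUnit f hf) := Nat.card_zpowers _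
          _ ≤ 3 := Nat.le_of_dvd (by norm_num)
              (orderOf_dvd_of_pow_eq_one (Units.ext (omega_cube f hf)))
      have heven := even_finrank_of_omega f hf
      obtain ⟨k, hk⟩ := heven
      have hk1 : 1 ≤ finrank (ZMod 2) V / 2 := by omega
      calc Nat.card A ≤ 3 := hcard
        _ = 3 ^ 1 := (pow_one 3).symm
        _ ≤ 3 ^ (finrank (ZMod 2) V / 2) := Nat.pow_le_pow_right (by norm_num) hk1
    · push_neg at hA
      obtain ⟨h, hhA, hnot⟩ := hA
      have hh3 : (h : (Module.End (ZMod 2) V)ˣ).val ^ 3 = 1 := by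
        rw [← Units.val_pow_eq_pow_val, hexp h hhA, Units.val_one]
      have hfh : f * h.val = h.val * f := hfA h hhA
      have haval : ∀ a ∈ A, (a : (Module.End (ZMod 2) V)ˣ).val * h.val = h.val * a.val := by
        intro a ha
        have := congrArg Units.val (hcomm a ha h hhA)
        simpa [Units.val_mul] using this
      by_cases hker1 : ker (h.val - 1) = ⊥
      · -- no fixed vectors: h satisfies h²+h+1 = 0; split by ω-eigenspaces
        obtain ⟨hsup0, _⟩ := decomp_one h.val hh3
        rw [hker1, bot_sup_eq] at hsup0
        have hb : h.val ^ 2 + h.val + 1 = 0 := LinearMap.ker_eq_top.mp hsup0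
        obtain ⟨hsup, hdisj⟩ := decomp_omega f h.val hfh hf hb
        refine finish _ _ hsup hdisj ?_ ?_ ?_ ?_ ?_ ?_
        · intro htop
          exact hnot (Subgroup.mem_zpowers_iff.mpr ⟨1, Units.ext (by
            rw [zpow_one]
            exact (sub_eq_zero.mp (LinearMap.ker_eq_top.mp htop)).symm)⟩)
        · intro htop
          refine hnot (Subgroup.mem_zpowers_iff.mpr ⟨2, Units.ext ?_⟩)
          rw [show ((2:ℤ)) = ((2:ℕ):ℤ) from rfl, zpow_natCast, Units.val_pow_eq_pow_val]
          exact (sub_eq_zero.mp (LinearMap.ker_eq_top.mp htop)).symm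
        · intro a ha v hv
          exact ker_inv _ _ (comm_sub (haval a ha) (hfA a ha).symm) v hv
        · intro a ha v hv
          exact ker_inv _ _ (comm_sub (haval a ha) (comm_pow2 (hfA a ha).symm)) v hv
        · intro v hv
          exact ker_inv _ _ (comm_sub hfh rfl) v hv
        · intro v hv
          exact ker_inv _ _ (comm_sub hfh (comm_pow2 rfl)) v hv
      · -- h has fixed vectors: split by ker(h-1) and ker(h²+h+1)
        obtain ⟨hsup, hdisj⟩ := decomp_one h.val hh3
        refine finish _ _ hsup hdisj ?_ ?_ ?_ ?_ ?_ ?_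
        · intro htop
          refine hnot ?_
          have h1 : h.val = 1 := by
            have := LinearMap.ker_eq_top.mp htop
            have := sub_eq_zero.mp this
            exact this
          exact Subgroup.mem_zpowers_iff.mpr ⟨0, Units.ext (by rw [zpow_zero, Units.val_one, h1])⟩
        · intro htop
          apply hker1
          rw [disjoint_iff, htop, inf_top_eq] at hdisj
          exact hdisj
        · intro a ha v hv
          exact ker_inv _ _ (comm_sub_one (haval a ha)) v hv
        · intro a ha v hv
          exact ker_inv _ _ (comm_quad (haval a ha)) v hv
        · intro v hv
          exact ker_inv _ _ (comm_sub_one hfh) v hv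
        · intro v hv
          exact ker_inv _ _ (comm_quad hfh) v hv

theorem lemF2 (n : ℕ) : ∀ (V : Type) [AddCommGroup V] [Module (ZMod 2) V]
    [FiniteDimensional (ZMod 2) V],
    finrank (ZMod 2) V ≤ n →
    ∀ (A : Subgroup (Module.End (ZMod 2) V)ˣ),
      (∀ x ∈ A, ∀ y ∈ A, x * y = y * x) →
      (∀ x ∈ A, x ^ 3 = 1) →
      Nat.card A ≤ 3 ^ (finrank (ZMod 2) V / 2) := by
  induction n with
  | zero =>
    intro V _ _ _ hle A hcomm hexp
    rw [card_eq_one_of_subsingleton (Module.finrank_zero_iff.mp (Nat.le_zero.mp hle)) A]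
    exact Nat.one_le_pow _ _ (by norm_num)
  | succ n ih =>
    intro V _ _ _ hle A hcomm hexp
    by_cases hA : ∀ x ∈ A, x = 1
    · have hbot : A = ⊥ := (Subgroup.eq_bot_iff_forall A).mpr hA
      rw [hbot]
      simp only [Subgroup.card_bot]
      exact Nat.one_le_pow _ _ (by norm_num)
    · push_neg at hA
      obtain ⟨g, hgA, hg1⟩ := hA
      have hg3 : (g : (Module.End (ZMod 2) V)ˣ).val ^ 3 = 1 := by
        rw [← Units.val_pow_eq_pow_val, hexp g hgA, Units.val_one]
      obtain ⟨hsup, hdisj⟩ := decomp_one g.val hg3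
      have haval : ∀ a ∈ A, (a : (Module.End (ZMod 2) V)ˣ).val * g.val = g.val * a.val := by
        intro a ha
        have := congrArg Units.val (hcomm a ha g hgA)
        simpa [Units.val_mul] using this
      have hinv1 : ∀ a ∈ A, ∀ v ∈ ker (g.val - 1), (a : (Module.End (ZMod 2) V)ˣ).val v ∈ ker (g.val - 1) := by
        intro a ha v hv
        exact ker_inv _ _ (comm_sub_one (haval a ha)) v hv
      have hinv2 : ∀ a ∈ A, ∀ v ∈ ker (g.val ^ 2 + g.val + 1),
          (a : (Module.End (ZMod 2) V)ˣ).val v ∈ ker (g.val ^ 2 + g.val + 1) := by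
        intro a ha v hv
        exact ker_inv _ _ (comm_quad (haval a ha)) v hv
      have hW2ne : ker (g.val ^ 2 + g.val + 1) ≠ ⊥ := by
        intro hbot
        rw [hbot, sup_bot_eq] at hsup
        exact hg1 (Units.ext (sub_eq_zero.mp (LinearMap.ker_eq_top.mp hsup)))
      have hW1ne : ker (g.val - 1) ≠ ⊤ := by
        intro htop
        apply hW2ne
        rw [disjoint_iff, htop, top_inf_eq] at hdisj
        exact hdisj
      have hlt1 : finrank (ZMod 2) (ker (g.val - 1)) ≤ n := by
        have := Submodule.finrank_lt (K := ZMod 2) hW1ne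
        omega
      -- the restricted g on W₂ is an omega element
      have hgW2 : ∀ v ∈ ker (g.val ^ 2 + g.val + 1), g.val v ∈ ker (g.val ^ 2 + g.val + 1) :=
        fun v hv => ker_inv _ _ (comm_quad rfl) v hv
      set f₂ := g.val.restrict hgW2 with hf₂def
      have hf₂ : f₂ ^ 2 + f₂ + 1 = 0 := by
        ext w
        have h0 : ((g.val ^ 2 + g.val + 1 : Module.End (ZMod 2) V)) (w : V) = 0 := w.2
        simp only [LinearMap.add_apply, LinearMap.zero_apply, Module.End.one_apply, pow_two,
          Module.End.mul_apply] at h0 ⊢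
        simp only [Submodule.coe_add, ZeroMemClass.coe_zero, hf₂def,
          LinearMap.restrict_coe_apply]
        exact h0
      refine combine_bound A _ _ hinv1 hinv2 hsup hdisj ?_ ?_
      · exact ih _ hlt1 _ (range_comm A _ hinv1 hcomm) (range_exp A _ hinv1 hexp)
      · refine lemF4 (finrank (ZMod 2) (ker (g.val ^ 2 + g.val + 1))) _ le_rfl f₂ hf₂ _
          (range_comm A _ hinv2 hcomm) (range_exp A _ hinv2 hexp)
          (range_op_comm A _ hinv2 g.val hgW2 ?_)
        intro a ha
        exact (haval a ha).symm

/-- An elementary abelian 3-subgroup of `GL_ℓ(𝔽₂)` has order at most `3^⌊ℓ/2⌋`. -/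
theorem stmt15 (ℓ : ℕ) (hl : 1 ≤ ℓ)
    (A : Subgroup (Matrix.GeneralLinearGroup (Fin ℓ) (ZMod 2)))
    (habelian : ∀ x ∈ A, ∀ y ∈ A, x * y = y * x)
    (hexp : ∀ x ∈ A, x ^ 3 = 1) :
    Nat.card A ≤ 3 ^ (ℓ / 2) := by
  let e : Matrix.GeneralLinearGroup (Fin ℓ) (ZMod 2) ≃*
      (Module.End (ZMod 2) (Fin ℓ → ZMod 2))ˣ := Matrix.GeneralLinearGroup.toLin
  let B := Subgroup.map (e : Matrix.GeneralLinearGroup (Fin ℓ) (ZMod 2) →*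
      (Module.End (ZMod 2) (Fin ℓ → ZMod 2))ˣ) A
  have hcard : Nat.card A = Nat.card B := Nat.card_congr (e.subgroupMap A).toEquiv
  have hBcomm : ∀ x ∈ B, ∀ y ∈ B, x * y = y * x := by
    rintro x ⟨a, ha, rfl⟩ y ⟨b, hb, rfl⟩
    rw [← map_mul, ← map_mul, habelian a ha b hb]
  have hBexp : ∀ x ∈ B, x ^ 3 = 1 := by
    rintro x ⟨a, ha, rfl⟩
    rw [← map_pow, hexp a ha, map_one]
  have hrank : finrank (ZMod 2) (Fin ℓ → ZMod 2) = ℓ := by simp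
  have := lemF2 ℓ (Fin ℓ → ZMod 2) (by rw [hrank]) B hBcomm hBexp
  rw [hrank] at this
  rw [hcard]
  exact this
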